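/- arXiv:0806.0799 — 15 statements merged into one kernel-verified Lean document; each statement's English description precedes it below -/
import Mathlib

section
/- Let L be the Bell rule operator. Then for every natural number n ≥ 1 and every polynomial p ∈ ℝ[X] with zero constant coefficient, L^n(X·p) = Σ_{k=0}^{n-1} C(n-1,k) · X·L^{k+1}(p) + L^{n-1}(X·p). (In operator form on the subspace xK[x]: L^n∘𝐱 = Σ_{k=0}^{n-1} C(n-1,k) 𝐱∘L^{k+1} + L^{n-1}∘𝐱.) -/
open Polynomial

lemma bell_rep (p : Polynomial ℝ) :
    p = ∑ k ∈ p.support, p.coeff k • (X : Polynomial ℝ) ^ k := by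
  conv_lhs => rw [p.as_sum_support]
  refine Finset.sum_congr rfl fun k _ => ?_
  rw [Polynomial.smul_X_eq_monomial]

lemma bell_support_pos {p : Polynomial ℝ} (hp : p.coeff 0 = 0) :
    ∀ k ∈ p.support, 1 ≤ k := by
  intro k hk
  rcases Nat.eq_zero_or_pos k with rfl | h
  · exact absurd hp (Polynomial.mem_support_iff.1 hk)
  · exact h

lemma bell_L_coeff0 (L : Module.End ℝ (Polynomial ℝ))
    (hL : ∀ k : ℕ, 1 ≤ k → L (X ^ k) = ((k : ℝ) - 1) • X ^ k + X ^ (k + 1))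
    (p : Polynomial ℝ) (hp : p.coeff 0 = 0) : (L p).coeff 0 = 0 := by
  conv_lhs => rw [bell_rep p]
  rw [map_sum]
  rw [Polynomial.finset_sum_coeff]
  refine Finset.sum_eq_zero fun k hk => ?_
  have h1 := bell_support_pos hp k hk
  rw [map_smul, hL k h1]
  simp only [Polynomial.coeff_smul, Polynomial.coeff_add, Polynomial.coeff_X_pow,
    if_neg (by omega : ¬ (0:ℕ) = k), if_neg (by omega : ¬ (0:ℕ) = k + 1),
    smul_eq_mul]
  ring

lemma bell_L_mul_X (L : Module.End ℝ (Polynomial ℝ))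
    (hL : ∀ k : ℕ, 1 ≤ k → L (X ^ k) = ((k : ℝ) - 1) • X ^ k + X ^ (k + 1))
    (p : Polynomial ℝ) (hp : p.coeff 0 = 0) :
    L (X * p) = X * L p + X * p := by
  conv_lhs => rw [bell_rep p]
  conv_rhs => rw [bell_rep p]
  simp only [map_sum, Finset.mul_sum]
  rw [← Finset.sum_add_distrib]
  refine Finset.sum_congr rfl fun k hk => ?_
  have h1 := bell_support_pos hp k hk
  rw [mul_smul_comm, map_smul, map_smul, mul_smul_comm, ← smul_add]
  congr 1
  rw [← pow_succ', hL k h1, hL (k+1) (by omega), mul_add, mul_smul_comm,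
    ← pow_succ', ← pow_succ']
  push_cast
  module

lemma bell_pow_coeff0 (L : Module.End ℝ (Polynomial ℝ))
    (hL : ∀ k : ℕ, 1 ≤ k → L (X ^ k) = ((k : ℝ) - 1) • X ^ k + X ^ (k + 1))
    (n : ℕ) (p : Polynomial ℝ) (hp : p.coeff 0 = 0) : ((L ^ n) p).coeff 0 = 0 := by
  induction n with
  | zero => simpa using hp
  | succ n ih => rw [pow_succ', Module.End.mul_apply]; exact bell_L_coeff0 L hL _ ih

lemma bell_pascal (a : ℕ → Polynomial ℝ) (n : ℕ) :
    ∑ k ∈ Finset.range (n+1), n.choose k • a (k+1)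
      + ∑ k ∈ Finset.range (n+1), n.choose k • a k
    = ∑ k ∈ Finset.range (n+2), (n+1).choose k • a k := by
  rw [Finset.sum_range_succ' (fun k => (n+1).choose k • a k) (n+1)]
  rw [Finset.sum_range_succ' (fun k => n.choose k • a k) n]
  have hext : ∑ k ∈ Finset.range n, n.choose (k+1) • a (k+1)
      = ∑ k ∈ Finset.range (n+1), n.choose (k+1) • a (k+1) := by
    rw [Finset.sum_range_succ]
    simp [Nat.choose_succ_self]
  rw [hext]
  simp only [Nat.choose_zero_right, one_smul]
  rw [← add_assoc]
  congr 1
  rw [← Finset.sum_add_distrib]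
  refine Finset.sum_congr rfl fun k _ => ?_
  rw [← add_smul, Nat.choose_succ_succ]

lemma bell_pow_mul_X (L : Module.End ℝ (Polynomial ℝ))
    (hL : ∀ k : ℕ, 1 ≤ k → L (X ^ k) = ((k : ℝ) - 1) • X ^ k + X ^ (k + 1))
    (n : ℕ) (p : Polynomial ℝ) (hp : p.coeff 0 = 0) :
    (L ^ n) (X * p) = ∑ k ∈ Finset.range (n+1), n.choose k • (X * (L ^ k) p) := by
  induction n with
  | zero => simp
  | succ n ih =>
    rw [pow_succ', Module.End.mul_apply, ih, map_sum]
    have hterm : ∀ k, L (X * (L ^ k) p) = X * (L ^ (k+1)) p + X * (L ^ k) p := by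
      intro k
      rw [bell_L_mul_X L hL _ (bell_pow_coeff0 L hL k p hp), pow_succ',
        Module.End.mul_apply]
    calc ∑ k ∈ Finset.range (n+1), L (n.choose k • (X * (L ^ k) p))
        = ∑ k ∈ Finset.range (n+1), n.choose k • (X * (L ^ (k+1)) p)
          + ∑ k ∈ Finset.range (n+1), n.choose k • (X * (L ^ k) p) := by
          rw [← Finset.sum_add_distrib]
          refine Finset.sum_congr rfl fun k _ => ?_
          rw [map_nsmul, hterm k, smul_add]
      _ = _ := bell_pascal (fun k => X * (L ^ k) p) n

/-- For the Bell rule operator `L` (the rule operator of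
`(k) ⇝ (k)^{k-1}(k+1)`, i.e. `L(X^k) = (k-1)·X^k + X^(k+1)` for `k ≥ 1`),
one has `L^n ∘ 𝐱 = Σ_{k=0}^{n-1} C(n-1,k) 𝐱 ∘ L^{k+1} + L^{n-1} ∘ 𝐱` on the
subspace of polynomials with zero constant coefficient. -/
theorem bell_operator_power_mul_X
    (L : Module.End ℝ (Polynomial ℝ))
    (hL : ∀ k : ℕ, 1 ≤ k → L (X ^ k) = ((k : ℝ) - 1) • X ^ k + X ^ (k + 1))
    (n : ℕ) (hn : 1 ≤ n) (p : Polynomial ℝ) (hp : p.coeff 0 = 0) :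
    (L ^ n) (X * p) =
      (∑ k ∈ Finset.range n, Nat.choose (n - 1) k • (X * (L ^ (k + 1)) p)) +
        (L ^ (n - 1)) (X * p) := by
  obtain ⟨m, rfl⟩ : ∃ m, n = m + 1 := ⟨n - 1, by omega⟩
  simp only [Nat.add_sub_cancel]
  rw [bell_pow_mul_X L hL (m+1) p hp, bell_pow_mul_X L hL m p hp,
    ← bell_pascal (fun k => X * (L ^ k) p) m]
end

section
/- Let L be the Bell rule operator and for natural numbers n and b ≥ 1 set f_n^{(b)} = (L^n(X^b)) evaluated at X = 1. Then for every b ≥ 1 and every n ≥ 1, f_n^{(b+1)} = Σ_{k=0}^{n-1} C(n-1,k) · f_{k+1}^{(b)} + f_{n-1}^{(b+1)}. -/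
open Polynomial

/-- For the Bell rule operator `L` and the associated family of
sequences `f n b = [L^n(X^b)]_{X=1}`, one has, for `b ≥ 1` and `n ≥ 1`,
`f_n^{(b+1)} = Σ_{k=0}^{n-1} C(n-1,k) f_{k+1}^{(b)} + f_{n-1}^{(b+1)}`. -/
theorem bell_sequence_recursion
    (L : Module.End ℝ (Polynomial ℝ))
    (hL : ∀ k : ℕ, 1 ≤ k → L (X ^ k) = ((k : ℝ) - 1) • X ^ k + X ^ (k + 1))
    (f : ℕ → ℕ → ℝ) (hf : ∀ n b, f n b = ((L ^ n) (X ^ b)).eval 1)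
    (b : ℕ) (hb : 1 ≤ b) (n : ℕ) (hn : 1 ≤ n) :
    f n (b + 1) =
      (∑ k ∈ Finset.range n, (Nat.choose (n - 1) k : ℝ) * f (k + 1) b) +
        f (n - 1) (b + 1) := by
  classical
  set S : Submodule ℝ (Polynomial ℝ) :=
    Submodule.span ℝ {p : Polynomial ℝ | ∃ k : ℕ, 1 ≤ k ∧ p = X ^ k} with hS
  have hmem : ∀ k : ℕ, 1 ≤ k → (X : Polynomial ℝ) ^ k ∈ S := fun k hk =>
    Submodule.subset_span ⟨k, hk, rfl⟩
  -- main invariance/commutation lemma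
  have key : ∀ p ∈ S, L p ∈ S ∧ L (X * p) = X * (L p) + X * p := by
    intro p hp
    refine Submodule.span_induction ?_ ?_ ?_ ?_ hp
    · rintro q ⟨k, hk, rfl⟩
      constructor
      · rw [hL k hk]
        exact S.add_mem (S.smul_mem _ (hmem k hk)) (hmem (k+1) (by omega))
      · have h1 : (X : Polynomial ℝ) * X ^ k = X ^ (k + 1) := by ring
        have h2 : (X : Polynomial ℝ) * X ^ (k+1) = X ^ (k + 2) := by ring
        rw [h1, hL (k+1) (by omega), hL k hk, mul_add, mul_smul_comm, h1, h2]
        push_cast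
        module
    · simp
    · intro x y hx hy ⟨hx1, hx2⟩ ⟨hy1, hy2⟩
      refine ⟨by rw [map_add]; exact S.add_mem hx1 hy1, ?_⟩
      rw [mul_add, map_add, map_add, hx2, hy2]
      ring
    · intro a x hx ⟨hx1, hx2⟩
      refine ⟨by rw [map_smul]; exact S.smul_mem a hx1, ?_⟩
      rw [mul_smul_comm, map_smul, map_smul, hx2, smul_add, mul_smul_comm a X (L x)]
  have hLS : ∀ p ∈ S, L p ∈ S := fun p hp => (key p hp).1
  have hL1S : ∀ p ∈ S, (L + 1) p ∈ S := by
    intro p hp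
    simp only [LinearMap.add_apply, Module.End.one_apply]
    exact S.add_mem (hLS p hp) hp
  have hL1pow : ∀ (m : ℕ) (p), p ∈ S → ((L + 1) ^ m) p ∈ S := by
    intro m
    induction m with
    | zero => intro p hp; simpa using hp
    | succ m ih =>
      intro p hp
      rw [pow_succ, Module.End.mul_apply]
      exact ih _ (hL1S p hp)
  -- commutation of L^n with multiplication by X
  have comm : ∀ (m : ℕ) (p), p ∈ S → (L ^ m) (X * p) = X * (((L + 1) ^ m) p) := by
    intro m
    induction m with
    | zero => intro p hp; simp
    | succ m ih =>
      intro p hp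
      have h1 : (L ^ (m + 1)) (X * p) = (L ^ m) (L (X * p)) := by
        rw [pow_succ, Module.End.mul_apply]
      rw [h1, (key p hp).2, ← mul_add]
      have h2 : L p + p = (L + 1) p := by
        simp [LinearMap.add_apply]
      rw [h2, ih _ (hL1S p hp), pow_succ, Module.End.mul_apply]
  -- binomial expansion
  have binom : ∀ m : ℕ, ((L + 1) ^ m : Module.End ℝ (Polynomial ℝ)) =
      ∑ k ∈ Finset.range (m + 1), (m.choose k : ℝ) • (L ^ k) := by
    intro m
    rw [Commute.add_pow (Commute.one_right L)]
    refine Finset.sum_congr rfl fun k hk => ?_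
    rw [one_pow, mul_one, Nat.cast_smul_eq_nsmul, nsmul_eq_mul]
    exact (Nat.cast_commute (m.choose k) (L ^ k)).eq.symm
  -- main formula: f m (b+1) = Σ_{k ≤ m} C(m,k) f k b
  have main : ∀ m : ℕ, f m (b + 1) =
      ∑ k ∈ Finset.range (m + 1), (m.choose k : ℝ) * f k b := by
    intro m
    have hx : (X : Polynomial ℝ) ^ (b + 1) = X * X ^ b := by ring
    rw [hf, hx, comm m _ (hmem b hb), binom m]
    simp only [LinearMap.sum_apply, LinearMap.smul_apply]
    rw [eval_mul, eval_X, one_mul, eval_finset_sum]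
    refine Finset.sum_congr rfl fun k hk => ?_
    rw [hf, eval_smul, smul_eq_mul]
  -- now the Pascal computation
  obtain ⟨m, rfl⟩ : ∃ m, n = m + 1 := ⟨n - 1, by omega⟩
  rw [main (m + 1)]
  simp only [Nat.add_sub_cancel]
  rw [main m]
  rw [Finset.sum_range_succ' (fun k => ((m+1).choose k : ℝ) * f k b) (m + 1)]
  have hsplit : ∀ k, (((m+1).choose (k+1) : ℝ)) = (m.choose k : ℝ) + (m.choose (k+1) : ℝ) := by
    intro k
    rw [← Nat.cast_add, ← Nat.choose_succ_succ']
  have : ∑ k ∈ Finset.range (m + 1), ((m+1).choose (k+1) : ℝ) * f (k+1) b =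
      ∑ k ∈ Finset.range (m + 1), (m.choose k : ℝ) * f (k+1) b +
      ∑ k ∈ Finset.range (m + 1), (m.choose (k+1) : ℝ) * f (k+1) b := by
    rw [← Finset.sum_add_distrib]
    refine Finset.sum_congr rfl fun k hk => ?_
    rw [hsplit k]; ring
  rw [this]
  have hlast : ∑ k ∈ Finset.range (m + 1), (m.choose (k+1) : ℝ) * f (k+1) b + ((m+1).choose 0 : ℝ) * f 0 b =
      ∑ k ∈ Finset.range (m + 1), (m.choose k : ℝ) * f k b := by
    rw [Finset.sum_range_succ (fun k => (m.choose (k+1) : ℝ) * f (k+1) b) m,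
      Finset.sum_range_succ' (fun k => (m.choose k : ℝ) * f k b) m]
    simp [Nat.choose_succ_self]
  ring_nf
  ring_nf at hlast
  linarith [hlast]
end

section
/- Let L be the Bell rule operator and for natural numbers n and b ≥ 1 set f_n^{(b)} = (L^n(X^b)) evaluated at X = 1. Then for every b ≥ 1 and every n, f_n^{(b+1)} = Σ_{k=0}^{n} C(n,k) · f_k^{(b)}. (Equivalently, in terms of exponential generating functions, f^{(b+1)}(x) = e^x · f^{(b)}(x), so f^{(b)} is the (b−1)-fold binomial transform of the Bell number sequence f^{(1)} and has exponential generating function e^{e^x + (b-1)x − 1}.) -/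
open Polynomial

namespace BellAux

noncomputable def S : Submodule ℝ (Polynomial ℝ) :=
  Submodule.span ℝ {p | ∃ j : ℕ, 1 ≤ j ∧ p = X ^ j}

lemma key (L : Module.End ℝ (Polynomial ℝ))
    (hL : ∀ k : ℕ, 1 ≤ k → L (X ^ k) = ((k : ℝ) - 1) • X ^ k + X ^ (k + 1)) :
    ∀ p ∈ S, L p ∈ S ∧ L (X * p) = X * L p + X * p := by
  intro p hp
  induction hp using Submodule.span_induction with
  | mem q hq =>
    obtain ⟨j, hj, rfl⟩ := hq
    constructor
    · rw [hL j hj]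
      exact add_mem (Submodule.smul_mem _ _ (Submodule.subset_span ⟨j, hj, rfl⟩))
        (Submodule.subset_span ⟨j + 1, by omega, rfl⟩)
    · rw [show X * X ^ j = X ^ (j + 1) by ring, hL (j + 1) (by omega), hL j hj]
      rw [mul_add, mul_smul_comm, ← pow_succ', ← pow_succ']
      push_cast
      rw [show ((j : ℝ) + 1 - 1) = ((j : ℝ) - 1) + 1 by ring, add_smul, one_smul]
      abel
  | zero => simp
  | add q r _ _ hq hr =>
    refine ⟨by rw [map_add]; exact add_mem hq.1 hr.1, ?_⟩
    rw [mul_add, map_add, map_add, hq.2, hr.2]; ring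
  | smul c q _ hq =>
    refine ⟨by rw [map_smul]; exact Submodule.smul_mem _ _ hq.1, ?_⟩
    rw [mul_smul_comm, map_smul, map_smul, hq.2, smul_add, mul_smul_comm]

lemma binom_step {M : Type*} [AddCommMonoid M] [Module ℝ M] (a : ℕ → M) (n : ℕ) :
    ∑ k ∈ Finset.range (n + 1), (n.choose k : ℝ) • (a (k + 1) + a k)
      = ∑ k ∈ Finset.range (n + 2), ((n + 1).choose k : ℝ) • a k := by
  have h1 : ∑ k ∈ Finset.range (n + 2), ((n + 1).choose k : ℝ) • a k
      = ∑ k ∈ Finset.range (n + 1), ((n + 1).choose (k + 1) : ℝ) • a (k + 1)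
        + ((n + 1).choose 0 : ℝ) • a 0 :=
    Finset.sum_range_succ' _ (n + 1)
  have h2 : ∑ k ∈ Finset.range (n + 1), (n.choose k : ℝ) • a k
      = ∑ k ∈ Finset.range n, (n.choose (k + 1) : ℝ) • a (k + 1) + (n.choose 0 : ℝ) • a 0 :=
    Finset.sum_range_succ' _ n
  have h3 : ∑ k ∈ Finset.range (n + 1), (n.choose (k + 1) : ℝ) • a (k + 1)
      = ∑ k ∈ Finset.range n, (n.choose (k + 1) : ℝ) • a (k + 1) := by
    rw [Finset.sum_range_succ]
    simp
  simp only [smul_add, Finset.sum_add_distrib, h1, h2, ← h3]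
  simp only [Nat.choose_succ_succ, Nat.cast_add, add_smul, Nat.choose_zero_right, Nat.cast_one]
  rw [Finset.sum_add_distrib]
  abel

lemma memS (L : Module.End ℝ (Polynomial ℝ))
    (hL : ∀ k : ℕ, 1 ≤ k → L (X ^ k) = ((k : ℝ) - 1) • X ^ k + X ^ (k + 1))
    (b : ℕ) (hb : 1 ≤ b) : ∀ n : ℕ, (L ^ n) (X ^ b) ∈ S := by
  intro n
  induction n with
  | zero => exact Submodule.subset_span ⟨b, hb, by simp⟩
  | succ n ih =>
    rw [pow_succ', Module.End.mul_apply]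
    exact (key L hL _ ih).1

lemma main (L : Module.End ℝ (Polynomial ℝ))
    (hL : ∀ k : ℕ, 1 ≤ k → L (X ^ k) = ((k : ℝ) - 1) • X ^ k + X ^ (k + 1))
    (b : ℕ) (hb : 1 ≤ b) : ∀ n : ℕ,
    (L ^ n) (X ^ (b + 1))
      = ∑ k ∈ Finset.range (n + 1), (n.choose k : ℝ) • (X * (L ^ k) (X ^ b)) := by
  intro n
  induction n with
  | zero => simp [pow_succ, mul_comm]
  | succ n ih =>
    rw [pow_succ', Module.End.mul_apply, ih, map_sum]
    have step : ∀ k, L (X * (L ^ k) (X ^ b))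
        = X * (L ^ (k + 1)) (X ^ b) + X * (L ^ k) (X ^ b) := by
      intro k
      rw [(key L hL _ (memS L hL b hb k)).2, pow_succ', Module.End.mul_apply]
    calc ∑ k ∈ Finset.range (n + 1), L ((n.choose k : ℝ) • (X * (L ^ k) (X ^ b)))
        = ∑ k ∈ Finset.range (n + 1),
            (n.choose k : ℝ) • (X * (L ^ (k + 1)) (X ^ b) + X * (L ^ k) (X ^ b)) := by
          refine Finset.sum_congr rfl fun k _ => ?_
          rw [map_smul, step k]
      _ = ∑ k ∈ Finset.range (n + 2), ((n + 1).choose k : ℝ) • (X * (L ^ k) (X ^ b)) :=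
          binom_step (fun k => X * (L ^ k) (X ^ b)) n

end BellAux

/-- For the Bell rule operator `L` and the associated family of
sequences `f n b = [L^n(X^b)]_{X=1}`, one has, for `b ≥ 1` and every `n`,
`f_n^{(b+1)} = Σ_{k=0}^{n} C(n,k) f_k^{(b)}`, i.e. the sequence with axiom
`b+1` is the binomial transform of the sequence with axiom `b`. -/
theorem bell_sequence_binomial_transform
    (L : Module.End ℝ (Polynomial ℝ))
    (hL : ∀ k : ℕ, 1 ≤ k → L (X ^ k) = ((k : ℝ) - 1) • X ^ k + X ^ (k + 1))
    (f : ℕ → ℕ → ℝ) (hf : ∀ n b, f n b = ((L ^ n) (X ^ b)).eval 1)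
    (b : ℕ) (hb : 1 ≤ b) (n : ℕ) :
    f n (b + 1) = ∑ k ∈ Finset.range (n + 1), (Nat.choose n k : ℝ) * f k b := by
  rw [hf, BellAux.main L hL b hb n]
  rw [eval_finset_sum]
  refine Finset.sum_congr rfl fun k _ => ?_
  rw [hf, smul_eq_C_mul]
  simp [mul_comm]
end

section
/- Let L be the Catalan rule operator. Then the Pincherle derivative of L on the subspace of polynomials with zero constant coefficient equals the operator c₂: explicitly, for every polynomial p ∈ ℝ[X] with zero constant coefficient, L(X·p) − X·L(p) = (p evaluated at 1) · X². -/
open Polynomial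

lemma catalan_key (L : Module.End ℝ (Polynomial ℝ))
    (hL : ∀ k : ℕ, 1 ≤ k → L (X ^ k) = ∑ i ∈ Finset.Icc 2 (k + 1), X ^ i)
    (n : ℕ) (hn : 1 ≤ n) : L (X * X ^ n) - X * L (X ^ n) = X ^ 2 := by
  have h1 : (X : ℝ[X]) * X ^ n = X ^ (n + 1) := (pow_succ' X n).symm
  rw [h1, hL (n + 1) (by omega), hL n hn, Finset.mul_sum]
  have h2 : ∀ i ∈ Finset.Icc 2 (n + 1), (X : ℝ[X]) * X ^ i = X ^ (i + 1) := by
    intro i _; exact (pow_succ' X i).symm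
  rw [Finset.sum_congr rfl h2]
  have h3 : ∑ i ∈ Finset.Icc 2 (n + 1), (X : ℝ[X]) ^ (i + 1)
      = ∑ j ∈ Finset.Icc 3 (n + 2), X ^ j := by
    rw [show (3 : ℕ) = 2 + 1 from rfl, show n + 2 = (n + 1) + 1 from rfl,
      ← Finset.map_add_right_Icc, Finset.sum_map]
    rfl
  have h4 : Finset.Icc 2 (n + 1 + 1) = insert 2 (Finset.Icc 3 (n + 2)) := by
    ext x; simp [Finset.mem_Icc]; omega
  rw [h3, h4, Finset.sum_insert (by simp)]
  ring

/-- For the Catalan rule operator `L` (the rule operator of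
`(k) ⇝ (2)(3)⋯(k)(k+1)`, i.e. `L(X^k) = Σ_{i=2}^{k+1} X^i` for `k ≥ 1`),
the Pincherle derivative `L𝐱 - 𝐱L` on the subspace of polynomials with zero
constant coefficient equals the operator `c₂ : p ↦ p(1)·X²`. -/
theorem catalan_operator_pincherle_derivative
    (L : Module.End ℝ (Polynomial ℝ))
    (hL : ∀ k : ℕ, 1 ≤ k → L (X ^ k) = ∑ i ∈ Finset.Icc 2 (k + 1), X ^ i)
    (p : Polynomial ℝ) (hp : p.coeff 0 = 0) :
    L (X * p) - X * L p = p.eval 1 • X ^ 2 := by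
  conv_lhs => rw [p.as_sum_support]
  have hm : ∀ i ∈ p.support, (monomial i (p.coeff i) : ℝ[X]) = p.coeff i • X ^ i := by
    intro i _; rw [smul_eq_C_mul, C_mul_X_pow_eq_monomial]
  rw [Finset.sum_congr rfl hm]
  simp only [Finset.mul_sum, map_sum, mul_smul_comm, map_smul]
  rw [← Finset.sum_sub_distrib]
  simp_rw [← smul_sub]
  have hterm : ∀ i ∈ p.support,
      p.coeff i • (L (X * X ^ i) - X * L (X ^ i)) = p.coeff i • (X ^ 2 : ℝ[X]) := by
    intro i hi
    have hi1 : 1 ≤ i := by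
      rcases Nat.eq_zero_or_pos i with h | h
      · exact absurd hp (by rw [← h]; exact mem_support_iff.mp hi)
      · exact h
    rw [catalan_key L hL i hi1]
  rw [Finset.sum_congr rfl hterm, ← Finset.sum_smul]
  congr 1
  conv_rhs => rw [p.as_sum_support]
  simp [eval_finset_sum]
end

section
/- Let L be the Catalan rule operator. Then for every natural number n and every polynomial p ∈ ℝ[X] with zero constant coefficient, L^n(X·p) = X·L^n(p) + Σ_{i=0}^{n-1} ((L^{n-1-i}(p)) evaluated at 1) · L^i(X²). (In operator form on xK[x]: L^n∘𝐱 = 𝐱∘L^n + Σ_{i=0}^{n-1} L^i ∘ c₂ ∘ L^{n-1-i}.) -/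
open Polynomial

private lemma catalan_step (L : Module.End ℝ (Polynomial ℝ))
    (hL : ∀ k : ℕ, 1 ≤ k → L (X ^ k) = ∑ i ∈ Finset.Icc 2 (k + 1), X ^ i)
    (k : ℕ) (hk : 1 ≤ k) :
    L (X ^ (k + 1)) = X * L (X ^ k) + X ^ 2 := by
  rw [hL (k + 1) (by omega), hL k hk, Finset.mul_sum]
  have h1 : ∑ i ∈ Finset.Icc 2 (k + 1), X * (X : Polynomial ℝ) ^ i
      = ∑ i ∈ Finset.Icc 3 (k + 2), X ^ i := by
    rw [show (3 : ℕ) = 2 + 1 from rfl, show k + 2 = (k + 1) + 1 from rfl,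
      ← Finset.map_add_right_Icc, Finset.sum_map]
    simp [pow_succ, mul_comm]
  rw [h1, show k + 1 + 1 = k + 2 from rfl,
    Finset.Icc_eq_cons_Ioc (by omega : 2 ≤ k + 2), Finset.sum_cons,
    ← Finset.Icc_add_one_left_eq_Ioc]
  ring

private lemma catalan_base (L : Module.End ℝ (Polynomial ℝ))
    (hL : ∀ k : ℕ, 1 ≤ k → L (X ^ k) = ∑ i ∈ Finset.Icc 2 (k + 1), X ^ i)
    (q : Polynomial ℝ) (hq : q.coeff 0 = 0) :
    L (X * q) = X * L q + q.eval 1 • X ^ 2 := by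
  have hrep := q.as_sum_support
  have hmem : ∀ k ∈ q.support, 1 ≤ k := by
    intro k hk
    rcases Nat.eq_zero_or_pos k with h | h
    · exact absurd (by simpa [h] using Polynomial.mem_support_iff.mp hk) (by simp [hq, h])
    · exact h
  calc L (X * q) = L (∑ k ∈ q.support, q.coeff k • X ^ (k + 1)) := by
        congr 1
        conv_lhs => rw [hrep]
        rw [Finset.mul_sum]
        refine Finset.sum_congr rfl fun k hk => ?_
        rw [← C_mul_X_pow_eq_monomial, Polynomial.smul_eq_C_mul]
        ring
    _ = ∑ k ∈ q.support, q.coeff k • L (X ^ (k + 1)) := by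
        rw [map_sum]; simp
    _ = ∑ k ∈ q.support, q.coeff k • (X * L (X ^ k) + X ^ 2) := by
        refine Finset.sum_congr rfl fun k hk => ?_
        rw [catalan_step L hL k (hmem k hk)]
    _ = X * L q + q.eval 1 • X ^ 2 := by
        simp only [smul_add]
        rw [Finset.sum_add_distrib]
        congr 1
        · conv_rhs => rw [hrep]
          rw [map_sum, Finset.mul_sum]
          refine Finset.sum_congr rfl fun k hk => ?_
          rw [← C_mul_X_pow_eq_monomial, ← Polynomial.smul_eq_C_mul, map_smul]
          rw [Polynomial.smul_eq_C_mul, Polynomial.smul_eq_C_mul]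
          ring
        · rw [← Finset.sum_smul]
          congr 1
          rw [Polynomial.eval_eq_sum, Polynomial.sum]
          simp

private lemma catalan_coeff0 (L : Module.End ℝ (Polynomial ℝ))
    (hL : ∀ k : ℕ, 1 ≤ k → L (X ^ k) = ∑ i ∈ Finset.Icc 2 (k + 1), X ^ i)
    (q : Polynomial ℝ) (hq : q.coeff 0 = 0) : (L q).coeff 0 = 0 := by
  have hrep := q.as_sum_support
  have hmem : ∀ k ∈ q.support, 1 ≤ k := by
    intro k hk
    rcases Nat.eq_zero_or_pos k with h | h
    · exact absurd (by simpa [h] using Polynomial.mem_support_iff.mp hk) (by simp [hq, h])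
    · exact h
  conv_lhs => rw [hrep]
  rw [map_sum, Polynomial.finset_sum_coeff]
  refine Finset.sum_eq_zero fun k hk => ?_
  rw [← C_mul_X_pow_eq_monomial, ← Polynomial.smul_eq_C_mul, map_smul,
    Polynomial.coeff_smul, hL k (hmem k hk), Polynomial.finset_sum_coeff]
  have : ∀ i ∈ Finset.Icc 2 (k + 1), ((X : Polynomial ℝ) ^ i).coeff 0 = 0 := by
    intro i hi
    simp only [Finset.mem_Icc] at hi
    rw [Polynomial.coeff_X_pow, if_neg (by omega)]
  rw [Finset.sum_eq_zero this, smul_zero]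

/-- For the Catalan rule operator `L`, one has
`L^n ∘ 𝐱 = 𝐱 ∘ L^n + Σ_{i=0}^{n-1} L^i ∘ c₂ ∘ L^{n-1-i}` on the subspace of
polynomials with zero constant coefficient, where `c₂ : p ↦ p(1)·X²`. -/
theorem catalan_operator_power_mul_X
    (L : Module.End ℝ (Polynomial ℝ))
    (hL : ∀ k : ℕ, 1 ≤ k → L (X ^ k) = ∑ i ∈ Finset.Icc 2 (k + 1), X ^ i)
    (n : ℕ) (p : Polynomial ℝ) (hp : p.coeff 0 = 0) :
    (L ^ n) (X * p) =
      X * (L ^ n) p +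
        ∑ i ∈ Finset.range n, ((L ^ (n - 1 - i)) p).eval 1 • (L ^ i) (X ^ 2) := by
  have hpow0 : ∀ m : ℕ, ((L ^ m) p).coeff 0 = 0 := by
    intro m
    induction m with
    | zero => simpa using hp
    | succ m ih =>
      rw [pow_succ', Module.End.mul_apply]
      exact catalan_coeff0 L hL _ ih
  induction n with
  | zero => simp
  | succ n ih =>
    rw [pow_succ', Module.End.mul_apply, ih, map_add, map_sum]
    rw [catalan_base L hL _ (hpow0 n)]
    rw [Finset.sum_range_succ']
    simp only [map_smul, ← Module.End.mul_apply, ← pow_succ']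
    have h0 : n + 1 - 1 - 0 = n := by omega
    rw [h0, pow_zero, Module.End.one_apply]
    have hidx : ∀ x : ℕ, 1 + n - 1 - (x + 1) = n - 1 - x := fun x => by omega
    have hidx2 : ∀ x : ℕ, n + 1 - 1 - (x + 1) = n - 1 - x := fun x => by omega
    simp only [hidx, hidx2]
    ring
end

section
/- Let L be the Catalan rule operator and for natural numbers n and b ≥ 1 set f_n^{(b)} = (L^n(X^b)) evaluated at X = 1. Then for every b ≥ 1 and every n, f_n^{(b+1)} = f_n^{(b)} + Σ_{i=0}^{n-1} f_i^{(2)} · f_{n-1-i}^{(b)}. -/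
open Polynomial

/-- For the Catalan rule operator `L` and the associated family of
sequences `f n b = [L^n(X^b)]_{X=1}`, one has, for `b ≥ 1` and every `n`,
`f_n^{(b+1)} = f_n^{(b)} + Σ_{i=0}^{n-1} f_i^{(2)} f_{n-1-i}^{(b)}`. -/
theorem catalan_sequence_recursion
    (L : Module.End ℝ (Polynomial ℝ))
    (hL : ∀ k : ℕ, 1 ≤ k → L (X ^ k) = ∑ i ∈ Finset.Icc 2 (k + 1), X ^ i)
    (f : ℕ → ℕ → ℝ) (hf : ∀ n b, f n b = ((L ^ n) (X ^ b)).eval 1)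
    (b : ℕ) (hb : 1 ≤ b) (n : ℕ) :
    f n (b + 1) = f n b + ∑ i ∈ Finset.range n, f i 2 * f (n - 1 - i) b := by
  have f0 : ∀ c, f 0 c = 1 := by
    intro c; rw [hf]; simp
  have frec : ∀ (m c : ℕ), 1 ≤ c → f (m + 1) c = ∑ j ∈ Finset.Icc 2 (c + 1), f m j := by
    intro m c hc
    rw [hf]
    have h1 : (L ^ (m + 1)) (X ^ c : Polynomial ℝ)
        = ∑ j ∈ Finset.Icc 2 (c + 1), (L ^ m) (X ^ j) := by
      rw [pow_succ, Module.End.mul_apply, hL c hc, map_sum]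
    rw [h1, Polynomial.eval_finset_sum]
    exact Finset.sum_congr rfl (fun j _ => (hf m j).symm)
  -- convolution identity
  have conv : ∀ m a c, 1 ≤ a → 1 ≤ c →
      f m (a + c) = ∑ i ∈ Finset.range (m + 1), f i a * f (m - i) c := by
    intro m
    induction m with
    | zero => intro a c ha hc; simp [f0]
    | succ m ih =>
      intro a c ha hc
      rw [Finset.sum_range_succ']
      simp only [f0, one_mul, Nat.succ_sub_succ, Nat.sub_zero]
      have hstep : ∀ i ∈ Finset.range (m + 1),
          f (i + 1) a * f (m - i) c = ∑ j ∈ Finset.Icc 2 (a + 1), f i j * f (m - i) c := by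
        intro i _
        rw [frec i a ha, Finset.sum_mul]
      rw [Finset.sum_congr rfl hstep, Finset.sum_comm]
      have hinner : ∀ j ∈ Finset.Icc 2 (a + 1),
          (∑ i ∈ Finset.range (m + 1), f i j * f (m - i) c) = f m (j + c) := by
        intro j hj
        rw [Finset.mem_Icc] at hj
        exact (ih j c (by omega) hc).symm
      rw [Finset.sum_congr rfl hinner]
      -- LHS
      rw [frec m (a + c) (by omega)]
      have e1 : Finset.Icc 2 (a + c + 1) = Finset.Ioc 1 (a + c + 1) := by
        ext x; simp [Finset.mem_Icc, Finset.mem_Ioc]; omega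
      have e2 : Finset.Icc 2 (c + 1) = Finset.Ioc 1 (c + 1) := by
        ext x; simp [Finset.mem_Icc, Finset.mem_Ioc]; omega
      have e3 : Finset.Icc (c + 2) (a + c + 1) = Finset.Ioc (c + 1) (a + c + 1) := by
        ext x; simp [Finset.mem_Icc, Finset.mem_Ioc]; omega
      have hsplit : ∑ j ∈ Finset.Icc 2 (a + c + 1), f m j
          = (∑ j ∈ Finset.Icc 2 (c + 1), f m j)
            + ∑ j ∈ Finset.Icc (c + 2) (a + c + 1), f m j := by
        rw [e1, e2, e3]
        exact (Finset.sum_Ioc_consecutive _ (by omega) (by omega)).symm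
      have hmap : ∑ j ∈ Finset.Icc (c + 2) (a + c + 1), f m j
          = ∑ j ∈ Finset.Icc 2 (a + 1), f m (j + c) := by
        have : Finset.Icc (c + 2) (a + c + 1)
            = Finset.map (addRightEmbedding c) (Finset.Icc 2 (a + 1)) := by
          rw [Finset.map_add_right_Icc]
          congr 1 <;> omega
        rw [this, Finset.sum_map]
        simp [addRightEmbedding_apply]
      rw [hsplit, hmap, ← frec m c hc]
      ring
  cases n with
  | zero => simp [f0]
  | succ n =>
    simp only [Nat.succ_sub_one]
    rw [frec n (b + 1) (by omega)]
    have hc : 2 ≤ b + 1 + 1 := by omega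
    rw [show b + 1 + 1 = (b + 1) + 1 from rfl,
      Finset.sum_Icc_succ_top (by omega : 2 ≤ b + 1 + 1)]
    rw [← frec n b hb, show b + 1 + 1 = 2 + b by omega, conv n 2 b (by omega) hb]
end

section
/- Let L be the Catalan rule operator and for natural numbers n and b ≥ 1 set f_n^{(b)} = (L^n(X^b)) evaluated at X = 1. Then for every b ≥ 1, the ordinary generating function of (f_n^{(b)})_{n∈ℕ} is the b-th power of the generating function of the Catalan numbers: as formal power series over ℝ, Σ_{n≥0} f_n^{(b)} x^n = (Σ_{n≥0} Catalan(n) x^n)^b, where Catalan(n) is the n-th Catalan number. -/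
open Polynomial

/-- The generating function of Catalan numbers. -/
noncomputable def catGF : PowerSeries ℝ := PowerSeries.mk fun n => (catalan n : ℝ)

lemma catGF_eq : catGF = 1 + PowerSeries.X * catGF ^ 2 := by
  ext n
  cases n with
  | zero => simp [catGF]
  | succ n =>
    rw [map_add, PowerSeries.coeff_succ_X_mul]
    simp only [catGF, pow_two, PowerSeries.coeff_mul, PowerSeries.coeff_mk]
    rw [Finset.Nat.sum_antidiagonal_eq_sum_range_succ_mk]
    have : ((catalan (n+1) : ℕ) : ℝ) = ∑ k ∈ Finset.range (n+1), (catalan k : ℝ) * (catalan (n - k) : ℝ) := by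
      rw [catalan_succ' n]
      push_cast
      rw [Finset.Nat.sum_antidiagonal_eq_sum_range_succ_mk]
    rw [this]
    have h1 : (PowerSeries.coeff (n+1)) (1 : PowerSeries ℝ) = 0 := by simp
    rw [h1, zero_add]

lemma X_mul_catGF_sq : PowerSeries.X * catGF ^ 2 = catGF - 1 := by
  have := catGF_eq
  linear_combination -this

lemma sum_Icc_two (k : ℕ) (g : ℕ → PowerSeries ℝ) :
    ∑ i ∈ Finset.Icc 2 (k+1), g i = ∑ j ∈ Finset.range k, g (j+2) := by
  induction k with
  | zero => simp
  | succ k ih =>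
    rw [Finset.sum_range_succ, ← ih, Finset.sum_Icc_succ_top (by omega : 2 ≤ k+1+1)]

/-- Key identity on monomials. -/
lemma keyX (L : Module.End ℝ (Polynomial ℝ))
    (hL : ∀ k : ℕ, 1 ≤ k → L (X ^ k) = ∑ i ∈ Finset.Icc 2 (k + 1), X ^ i)
    (k : ℕ) (hk : 1 ≤ k) :
    PowerSeries.X * (aeval catGF) (L (X ^ k)) = catGF ^ k - 1 := by
  rw [hL k hk, map_sum]
  simp only [map_pow, aeval_X]
  rw [sum_Icc_two k (fun i => catGF ^ i), Finset.mul_sum]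
  have h : ∀ j : ℕ, PowerSeries.X * catGF ^ (j+2) = catGF ^ j * (catGF - 1) := by
    intro j
    rw [← X_mul_catGF_sq]
    ring
  simp only [h]
  rw [← Finset.sum_mul, geom_sum_mul]

lemma keyP (L : Module.End ℝ (Polynomial ℝ))
    (hL : ∀ k : ℕ, 1 ≤ k → L (X ^ k) = ∑ i ∈ Finset.Icc 2 (k + 1), X ^ i)
    (p : Polynomial ℝ) (hp : p.coeff 0 = 0) :
    PowerSeries.X * (aeval catGF) (L p)
      = (aeval catGF) p - PowerSeries.C (p.eval 1) ∧ (L p).coeff 0 = 0 := by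
  have hmem : ∀ i ∈ p.support, 1 ≤ i := by
    intro i hi
    rcases Nat.eq_zero_or_pos i with h | h
    · exfalso; apply Polynomial.mem_support_iff.mp hi; rw [h]; exact hp
    · exact h
  have hrep : p = ∑ i ∈ p.support, (p.coeff i) • (X ^ i : Polynomial ℝ) := by
    conv_lhs => rw [p.as_sum_support]
    refine Finset.sum_congr rfl fun i _ => ?_
    rw [Polynomial.smul_eq_C_mul, Polynomial.C_mul_X_pow_eq_monomial]
  have h1 : L p = ∑ i ∈ p.support, (p.coeff i) • L (X ^ i) := by
    conv_lhs => rw [hrep]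
    rw [map_sum]
    simp only [map_smul]
  have h2 : (aeval catGF) p = ∑ i ∈ p.support, (p.coeff i) • catGF ^ i := by
    conv_lhs => rw [hrep]
    rw [map_sum]
    simp only [map_smul, map_pow, aeval_X]
  have h3 : p.eval 1 = ∑ i ∈ p.support, p.coeff i := by
    conv_lhs => rw [hrep]
    rw [Polynomial.eval_finset_sum]
    simp
  constructor
  · rw [h1, h2, h3, map_sum, map_sum, Finset.mul_sum, ← Finset.sum_sub_distrib]
    refine Finset.sum_congr rfl fun i hi => ?_
    rw [map_smul, mul_smul_comm, keyX L hL i (hmem i hi), smul_sub]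
    congr 1
    rw [PowerSeries.smul_eq_C_mul, mul_one]
  · rw [h1, Polynomial.finset_sum_coeff]
    refine Finset.sum_eq_zero fun i hi => ?_
    rw [Polynomial.coeff_smul, hL i (hmem i hi), Polynomial.finset_sum_coeff]
    have h4 : ∀ j ∈ Finset.Icc 2 (i+1), (X ^ j : Polynomial ℝ).coeff 0 = 0 := by
      intro j hj
      simp only [Finset.mem_Icc] at hj
      rw [Polynomial.coeff_X_pow, if_neg (by omega)]
    rw [Finset.sum_eq_zero h4]
    simp

/-- For the Catalan rule operator `L` and the associated family of
sequences `f n b = [L^n(X^b)]_{X=1}`, for every axiom `b ≥ 1` the ordinary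
generating function of `(f_n^{(b)})_n` is the `b`-th power of the generating
function of the Catalan numbers. -/
theorem catalan_sequence_generating_function
    (L : Module.End ℝ (Polynomial ℝ))
    (hL : ∀ k : ℕ, 1 ≤ k → L (X ^ k) = ∑ i ∈ Finset.Icc 2 (k + 1), X ^ i)
    (f : ℕ → ℕ → ℝ) (hf : ∀ n b, f n b = ((L ^ n) (X ^ b)).eval 1)
    (b : ℕ) (hb : 1 ≤ b) :
    PowerSeries.mk (fun n => f n b) =
      (PowerSeries.mk fun n => (catalan n : ℝ)) ^ b := by
  set p : ℕ → Polynomial ℝ := fun n => (L ^ n) (X ^ b) with hp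
  have hcoeff0 : ∀ n, (p n).coeff 0 = 0 := by
    intro n
    induction n with
    | zero =>
      simp only [hp, pow_zero, Module.End.one_apply]
      rw [Polynomial.coeff_X_pow, if_neg (by omega)]
    | succ n ih =>
      have hstep : p (n+1) = L (p n) := by
        simp only [hp, pow_succ']
        rfl
      rw [hstep]
      exact (keyP L hL (p n) ih).2
  set q : ℕ → PowerSeries ℝ := fun n => (aeval catGF) (p n) with hq
  have hrec : ∀ n, q n = PowerSeries.C (f n b) + PowerSeries.X * q (n+1) := by
    intro n
    have hstep : p (n+1) = L (p n) := by
      simp only [hp, pow_succ']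
      rfl
    have h := (keyP L hL (p n) (hcoeff0 n)).1
    rw [← hstep] at h
    rw [hf n b]
    simp only [hq]
    linear_combination -h
  have hcoeffq : ∀ n m, PowerSeries.coeff n (q m) = f (m + n) b := by
    intro n
    induction n with
    | zero =>
      intro m
      rw [hrec m, map_add]
      simp [PowerSeries.coeff_zero_eq_constantCoeff]
    | succ n ih =>
      intro m
      rw [hrec m, map_add, PowerSeries.coeff_succ_X_mul, ih (m+1)]
      have h : (PowerSeries.coeff (n+1)) (PowerSeries.C (f m b)) = 0 := by simp
      rw [h, zero_add]
      congr 1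
      omega
  have hq0 : q 0 = catGF ^ b := by
    simp only [hq, hp, pow_zero, Module.End.one_apply, map_pow, aeval_X]
  have hfinal : (PowerSeries.mk fun n => (catalan n : ℝ)) = catGF := rfl
  rw [hfinal, ← hq0]
  ext n
  rw [PowerSeries.coeff_mk, hcoeffq n 0]
  congr 1
  omega
end

section
/- Let L be the Motzkin rule operator. Then the Pincherle derivative of L on the subspace of polynomials with zero constant coefficient equals the operator c₁: explicitly, for every polynomial p ∈ ℝ[X] with zero constant coefficient, L(X·p) − X·L(p) = (p evaluated at 1) · X. -/
open Polynomial

private lemma sum_step (m : ℕ) :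
    (∑ i ∈ Finset.Icc 1 (m + 1), (X : Polynomial ℝ) ^ i)
      - X * ∑ i ∈ Finset.Icc 1 m, (X : Polynomial ℝ) ^ i = X := by
  induction m with
  | zero => simp
  | succ m ih =>
    rw [Finset.sum_Icc_succ_top (by omega : 1 ≤ m + 2),
        Finset.sum_Icc_succ_top (by omega : 1 ≤ m + 1), mul_add]
    rw [Finset.sum_Icc_succ_top (by omega : 1 ≤ m + 1)] at ih
    linear_combination ih

private lemma key (L : Module.End ℝ (Polynomial ℝ))
    (hL1 : L X = X ^ 2)
    (hL : ∀ k : ℕ, 2 ≤ k →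
      L (X ^ k) = (∑ i ∈ Finset.Icc 1 (k - 1), X ^ i) + X ^ (k + 1)) (n : ℕ) :
    L (X ^ (n + 2)) - X * L (X ^ (n + 1)) = X := by
  cases n with
  | zero => rw [hL 2 (by norm_num), pow_one, hL1]; simp; ring
  | succ n =>
    rw [hL (n + 3) (by omega), hL (n + 2) (by omega)]
    have := sum_step (m := n + 1)
    simp only [show n + 3 - 1 = n + 2 by omega, show n + 2 - 1 = n + 1 by omega] at *
    rw [mul_add]
    calc (∑ i ∈ Finset.Icc 1 (n + 2), (X:Polynomial ℝ) ^ i) + X ^ (n + 3 + 1)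
          - (X * ∑ i ∈ Finset.Icc 1 (n + 1), X ^ i + X * X ^ (n + 2 + 1))
        = (∑ i ∈ Finset.Icc 1 (n + 2), (X:Polynomial ℝ) ^ i)
            - X * ∑ i ∈ Finset.Icc 1 (n + 1), X ^ i := by ring
      _ = X := this

/-- For the Motzkin rule operator `L` (the rule operator of
`(k) ⇝ (1)(2)⋯(k-1)(k+1)`, i.e. `L(X) = X²` and
`L(X^k) = Σ_{i=1}^{k-1} X^i + X^(k+1)` for `k ≥ 2`), the Pincherle derivative
`L𝐱 - 𝐱L` on the subspace of polynomials with zero constant coefficient equals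
the operator `c₁ : p ↦ p(1)·X`. -/
theorem motzkin_operator_pincherle_derivative
    (L : Module.End ℝ (Polynomial ℝ))
    (hL1 : L X = X ^ 2)
    (hL : ∀ k : ℕ, 2 ≤ k →
      L (X ^ k) = (∑ i ∈ Finset.Icc 1 (k - 1), X ^ i) + X ^ (k + 1))
    (p : Polynomial ℝ) (hp : p.coeff 0 = 0) :
    L (X * p) - X * L p = p.eval 1 • X := by
  have hdiv : X * p.divX = p := by
    have := Polynomial.X_mul_divX_add p
    rw [hp, map_zero, add_zero] at this
    exact this
  have main : ∀ q : Polynomial ℝ,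
      L (X * (X * q)) - X * L (X * q) = q.eval 1 • X := by
    intro q
    induction q using Polynomial.induction_on' with
    | add a b ha hb =>
      simp only [mul_add, map_add, eval_add, add_smul]
      rw [← ha, ← hb]; ring
    | monomial n r =>
      have : (X : Polynomial ℝ) * (X * (monomial n) r) = r • X ^ (n + 2) := by
        simp [Polynomial.smul_eq_C_mul, X_pow_eq_monomial, monomial_mul_monomial]
      have h2 : (X : Polynomial ℝ) * (monomial n) r = r • X ^ (n + 1) := by
        simp [Polynomial.smul_eq_C_mul, X_pow_eq_monomial, monomial_mul_monomial]
      rw [this, h2, map_smul, map_smul]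
      rw [mul_smul_comm, ← smul_sub, key L hL1 hL n]
      simp [Polynomial.smul_eq_C_mul]
  calc L (X * p) - X * L p
      = L (X * (X * p.divX)) - X * L (X * p.divX) := by rw [hdiv]
    _ = p.divX.eval 1 • X := main p.divX
    _ = p.eval 1 • X := by
        have he : p.eval 1 = p.divX.eval 1 := by nth_rewrite 1 [← hdiv]; simp
        rw [he]
end

section
/- Let L be the Motzkin rule operator and for natural numbers n and b ≥ 1 set f_n^{(b)} = (L^n(X^b)) evaluated at X = 1. Then for every b ≥ 1 and every n, f_n^{(b+1)} = f_n^{(b)} + Σ_{i=0}^{n-1} f_i^{(1)} · f_{n-1-i}^{(b)}. -/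
open Polynomial

/-- For the Motzkin rule operator `L` and the associated family of
sequences `f n b = [L^n(X^b)]_{X=1}`, one has, for `b ≥ 1` and every `n`,
`f_n^{(b+1)} = f_n^{(b)} + Σ_{i=0}^{n-1} f_i^{(1)} f_{n-1-i}^{(b)}`. -/
theorem motzkin_sequence_recursion
    (L : Module.End ℝ (Polynomial ℝ))
    (hL1 : L X = X ^ 2)
    (hL : ∀ k : ℕ, 2 ≤ k →
      L (X ^ k) = (∑ i ∈ Finset.Icc 1 (k - 1), X ^ i) + X ^ (k + 1))
    (f : ℕ → ℕ → ℝ) (hf : ∀ n b, f n b = ((L ^ n) (X ^ b)).eval 1)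
    (b : ℕ) (hb : 1 ≤ b) (n : ℕ) :
    f n (b + 1) = f n b + ∑ i ∈ Finset.range n, f i 1 * f (n - 1 - i) b := by
  obtain ⟨c, rfl⟩ : ∃ c, b = c + 1 := ⟨b - 1, (Nat.succ_pred_eq_of_pos hb).symm⟩
  -- step lemma: L(X^(m+1)) = L(X^m) + (X^m - X^(m+1) + X^(m+2))
  have hstep : ∀ m : ℕ, 1 ≤ m →
      L (X ^ (m + 1)) = L (X ^ m) + (X ^ m - X ^ (m + 1) + X ^ (m + 2)) := by
    intro m hm
    rcases Nat.lt_or_ge m 2 with h | h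
    · have hm1 : m = 1 := by omega
      subst hm1
      show L (X ^ 2) = L (X ^ 1) + (X ^ 1 - X ^ 2 + X ^ 3)
      rw [hL 2 (by norm_num), pow_one, hL1,
        show (2 : ℕ) - 1 = 1 from rfl, Finset.Icc_self, Finset.sum_singleton]
      ring
    · obtain ⟨j, rfl⟩ : ∃ j, m = j + 2 := ⟨m - 2, by omega⟩
      show L (X ^ (j + 3)) = L (X ^ (j + 2)) + (X ^ (j + 2) - X ^ (j + 3) + X ^ (j + 4))
      rw [hL (j + 3) (by omega), hL (j + 2) (by omega),
        show (j + 3 : ℕ) - 1 = (j + 1) + 1 from rfl,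
        show (j + 2 : ℕ) - 1 = j + 1 from rfl,
        Finset.sum_Icc_succ_top (by omega : (1 : ℕ) ≤ j + 1 + 1)]
      ring
  -- key lemma by induction on k
  have hkey : ∀ c' : ℕ, ∀ k : ℕ, 1 ≤ k →
      L (X ^ (c' + k + 1) - X ^ (c' + k)) =
        (X ^ (c' + 1) - X ^ c') * L (X ^ k) + X ^ (c' + 1) := by
    intro c' k hk
    induction k, hk using Nat.le_induction with
    | base =>
      have e := hstep (c' + 1) (by omega)
      rw [map_sub, e, pow_one, hL1]
      ring
    | succ k hk ih =>
      have e1 : L (X ^ (c' + (k + 1) + 1)) = L (X ^ (c' + k + 1)) +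
          (X ^ (c' + k + 1) - X ^ (c' + k + 2) + X ^ (c' + k + 3)) :=
        hstep (c' + k + 1) (by omega)
      have e2 : L (X ^ (c' + (k + 1))) = L (X ^ (c' + k)) +
          (X ^ (c' + k) - X ^ (c' + k + 1) + X ^ (c' + k + 2)) :=
        hstep (c' + k) (by omega)
      have e3 := hstep k hk
      have ih' : L (X ^ (c' + k + 1)) - L (X ^ (c' + k)) =
          (X ^ (c' + 1) - X ^ c') * L (X ^ k) + X ^ (c' + 1) := by
        rw [← map_sub]; exact ih
      rw [map_sub, e1, e2, e3]
      linear_combination ih'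
  -- the submodule spanned by positive powers of X
  set M : Submodule ℝ (Polynomial ℝ) :=
    Submodule.span ℝ (Set.range fun k : ℕ => (X : Polynomial ℝ) ^ (k + 1)) with hM
  have hXmem : ∀ k : ℕ, 1 ≤ k → (X : Polynomial ℝ) ^ k ∈ M := by
    intro k hk
    apply Submodule.subset_span
    refine ⟨k - 1, ?_⟩
    show (X : Polynomial ℝ) ^ (k - 1 + 1) = X ^ k
    rw [Nat.sub_add_cancel hk]
  have hLM : ∀ p ∈ M, L p ∈ M := by
    intro p hp
    induction hp using Submodule.span_induction with
    | mem x h =>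
      obtain ⟨k, rfl⟩ := h
      show L (X ^ (k + 1)) ∈ M
      rcases Nat.eq_zero_or_pos k with rfl | hk
      · rw [show (0 : ℕ) + 1 = 1 from rfl, pow_one, hL1]
        exact hXmem 2 (by norm_num)
      · rw [hL (k + 1) (by omega)]
        apply Submodule.add_mem
        · apply Submodule.sum_mem
          intro i hi
          exact hXmem i (Finset.mem_Icc.mp hi).1
        · exact hXmem (k + 1 + 1) (by omega)
    | zero => rw [map_zero]; exact Submodule.zero_mem _
    | add x y hx hy ihx ihy => rw [map_add]; exact Submodule.add_mem _ ihx ihy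
    | smul a x hx ihx => rw [map_smul]; exact Submodule.smul_mem _ _ ihx
  -- multiplicative key property on M
  have hkeyM : ∀ p ∈ M, ∀ c' : ℕ,
      L ((X ^ (c' + 1) - X ^ c') * p) =
        (X ^ (c' + 1) - X ^ c') * L p + p.eval 1 • X ^ (c' + 1) := by
    intro p hp
    induction hp using Submodule.span_induction with
    | mem x h =>
      obtain ⟨k, rfl⟩ := h
      intro c'
      show L ((X ^ (c' + 1) - X ^ c') * X ^ (k + 1)) = _
      have h1 : (X ^ (c' + 1) - X ^ c') * (X : Polynomial ℝ) ^ (k + 1) =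
          X ^ (c' + (k + 1) + 1) - X ^ (c' + (k + 1)) := by ring
      rw [h1, hkey c' (k + 1) (by omega)]
      simp
    | zero => intro c'; simp
    | add x y hx hy ihx ihy =>
      intro c'
      rw [mul_add, map_add, ihx c', ihy c', map_add, mul_add, eval_add, add_smul]
      abel
    | smul a x hx ihx =>
      intro c'
      calc L ((X ^ (c' + 1) - X ^ c') * (a • x))
          = a • L ((X ^ (c' + 1) - X ^ c') * x) := by
            rw [mul_smul_comm, map_smul]
        _ = a • ((X ^ (c' + 1) - X ^ c') * L x + eval 1 x • X ^ (c' + 1)) := by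
            rw [ihx c']
        _ = (X ^ (c' + 1) - X ^ c') * L (a • x) + eval 1 (a • x) • X ^ (c' + 1) := by
            rw [map_smul, eval_smul, smul_add, smul_smul, mul_smul_comm, smul_eq_mul]
  have hpowM : ∀ m : ℕ, (L ^ m) X ∈ M := by
    intro m
    induction m with
    | zero =>
      simpa using hXmem 1 le_rfl
    | succ m ih =>
      rw [pow_succ' L m, Module.End.mul_apply]
      exact hLM _ ih
  -- main polynomial identity
  have hmain : ∀ m : ℕ,
      (L ^ m) (X ^ (c + 2)) =
        (L ^ m) (X ^ (c + 1)) +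
          (∑ i ∈ Finset.range m, f i 1 • (L ^ (m - 1 - i)) (X ^ (c + 1))) +
          (X ^ (c + 1) - X ^ c) * (L ^ m) X := by
    intro m
    induction m with
    | zero =>
      simp only [pow_zero, Module.End.one_apply, Finset.range_zero, Finset.sum_empty,
        add_zero]
      ring
    | succ m ih =>
      have happ : ∀ q : Polynomial ℝ, (L ^ (m + 1)) q = L ((L ^ m) q) := by
        intro q; rw [pow_succ' L m, Module.End.mul_apply]
      rw [happ (X ^ (c + 2)), ih, map_add, map_add, map_sum]
      have hsum : (∑ i ∈ Finset.range m, L (f i 1 • (L ^ (m - 1 - i)) (X ^ (c + 1)))) =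
          ∑ i ∈ Finset.range m, f i 1 • (L ^ (m - i)) (X ^ (c + 1)) := by
        refine Finset.sum_congr rfl fun i hi => ?_
        have hi' : i < m := Finset.mem_range.mp hi
        rw [map_smul, show m - i = (m - 1 - i) + 1 by omega, pow_succ' L (m - 1 - i),
          Module.End.mul_apply]
      have hlast : L ((X ^ (c + 1) - X ^ c) * (L ^ m) X) =
          (X ^ (c + 1) - X ^ c) * (L ^ (m + 1)) X + f m 1 • X ^ (c + 1) := by
        rw [hkeyM _ (hpowM m) c, ← happ X, hf m 1, pow_one]
      rw [hsum, hlast]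
      simp only [Nat.add_sub_cancel]
      rw [Finset.sum_range_succ, Nat.sub_self, pow_zero, Module.End.one_apply,
        happ (X ^ (c + 1))]
      abel
  -- evaluate at 1
  have hev := congrArg (eval 1) (hmain n)
  simp only [eval_add, eval_mul, eval_sub, eval_pow, eval_X, one_pow, sub_self,
    zero_mul, add_zero, eval_finset_sum, eval_smul, smul_eq_mul] at hev
  rw [hf n (c + 1 + 1), hf n (c + 1), show c + 1 + 1 = c + 2 from rfl, hev]
  congr 1
  refine Finset.sum_congr rfl fun i _ => ?_
  rw [hf (n - 1 - i) (c + 1)]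
end

section
/- Let L be the Motzkin rule operator and for natural numbers n and b ≥ 1 set f_n^{(b)} = (L^n(X^b)) evaluated at X = 1. Then for every b ≥ 1, as formal power series over ℝ, Σ_{n≥0} f_n^{(b)} x^n = F¹(x) · (x·F¹(x) + 1)^{b-1}, where F¹(x) = Σ_{n≥0} f_n^{(1)} x^n is the generating function of the sequence with axiom 1 (the Motzkin numbers). In other words, f^{(b)}(x) = f^{(b-1)}(x)·(x·M(x)+1) where M(x) is the Motzkin generating function M(x) = F¹(x). -/
open Polynomial

open Finset

lemma icc_sum (m : ℕ) : (∑ i ∈ Finset.Icc 1 m, (X:ℝ[X]) ^ i) = ∑ i ∈ Finset.range m, X ^ (i+1) := by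
  rw [← Finset.Ico_add_one_right_eq_Icc, Finset.sum_Ico_eq_sum_range]
  simp [add_comm]

noncomputable def motzS : Submodule ℝ (Polynomial ℝ) := Submodule.span ℝ {p | ∃ k, 1 ≤ k ∧ p = (X:ℝ[X]) ^ k}

lemma pow_mem_motzS (k : ℕ) (hk : 1 ≤ k) : (X:ℝ[X]) ^ k ∈ motzS :=
  Submodule.subset_span ⟨k, hk, rfl⟩

section
variable (L : Module.End ℝ (Polynomial ℝ))
  (hL1 : L X = X ^ 2)
  (hL : ∀ k : ℕ, 2 ≤ k →
      L (X ^ k) = (∑ i ∈ Finset.Icc 1 (k - 1), X ^ i) + X ^ (k + 1))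

include hL1 hL

lemma L_mem : ∀ p ∈ motzS, L p ∈ motzS := by
  intro p hp
  induction hp using Submodule.span_induction with
  | mem p hp =>
    obtain ⟨k, hk, rfl⟩ := hp
    rcases eq_or_lt_of_le hk with h | h
    · rw [← h, pow_one, hL1]
      exact pow_mem_motzS 2 (by norm_num)
    · rw [hL k h]
      refine Submodule.add_mem _ (Submodule.sum_mem _ fun i hi => ?_) (pow_mem_motzS _ (by omega))
      exact pow_mem_motzS i (mem_Icc.mp hi).1
  | zero => simp
  | add p q _ _ hp hq => rw [map_add]; exact Submodule.add_mem _ hp hq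
  | smul c p _ hp => rw [map_smul]; exact Submodule.smul_mem _ _ hp

lemma L_mul_X : ∀ p ∈ motzS, L (X * p) = X * L p + C (p.eval 1) * X := by
  intro p hp
  induction hp using Submodule.span_induction with
  | mem p hp =>
    obtain ⟨k, hk, rfl⟩ := hp
    have hx : (X:ℝ[X]) * X ^ k = X ^ (k+1) := by ring
    rw [hx, hL (k+1) (by omega), eval_pow, eval_X, one_pow, map_one, one_mul]
    rcases eq_or_lt_of_le hk with h | h
    · rw [← h, pow_one, hL1]
      norm_num [icc_sum]
      ring
    · rw [hL k h]
      obtain ⟨m, rfl⟩ : ∃ m, k = m + 1 := ⟨k - 1, by omega⟩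
      simp only [Nat.add_sub_cancel, icc_sum]
      rw [Finset.sum_range_succ', mul_add, Finset.mul_sum]
      have : ∀ i, (X:ℝ[X]) * X ^ (i+1) = X ^ (i+1+1) := fun i => by ring
      simp only [this, pow_zero, pow_one]
      ring
  | zero => simp
  | add p q _ _ hp hq =>
    rw [mul_add, map_add, map_add, hp, hq, eval_add, map_add]
    ring
  | smul c p _ hp =>
    rw [mul_smul_comm, map_smul, hp, map_smul, eval_smul, smul_eq_mul, map_mul]
    simp [smul_add, smul_eq_C_mul]
    ring

lemma Ln_mem (n : ℕ) (p : Polynomial ℝ) (hp : p ∈ motzS) : (L ^ n) p ∈ motzS := by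
  induction n with
  | zero => simpa using hp
  | succ n ih =>
    rw [pow_succ', Module.End.mul_apply]
    exact L_mem L hL1 hL _ ih

lemma key_s10 (b n : ℕ) (hb : 1 ≤ b) :
    (L ^ n) (X ^ (b+1)) = X * (L ^ n) (X ^ b)
      + ∑ j ∈ Finset.range n, (((L ^ j) (X ^ b)).eval 1) • (L ^ (n - 1 - j)) X := by
  induction n with
  | zero => simp only [pow_zero, Module.End.one_apply, Finset.range_zero, Finset.sum_empty, add_zero]; ring
  | succ n ih =>
    rw [pow_succ', Module.End.mul_apply, ih, map_add, map_sum]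
    have hP : (L ^ n) (X ^ b) ∈ motzS := Ln_mem L hL1 hL n _ (pow_mem_motzS b hb)
    rw [L_mul_X L hL1 hL _ hP]
    rw [Finset.sum_range_succ]
    have h1 : ∀ j ∈ Finset.range n,
        L ((((L ^ j) (X ^ b)).eval 1) • (L ^ (n - 1 - j)) X)
          = (((L ^ j) (X ^ b)).eval 1) • (L ^ (n + 1 - 1 - j)) X := by
      intro j hj
      rw [map_smul]
      congr 1
      have : n + 1 - 1 - j = (n - 1 - j) + 1 := by
        simp at hj; omega
      rw [this, pow_succ', Module.End.mul_apply]
    rw [Finset.sum_congr rfl h1]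
    have h2 : n + 1 - 1 - n = 0 := by omega
    rw [h2, pow_zero, Module.End.one_apply]
    rw [Module.End.mul_apply, smul_eq_C_mul]
    ring

end
section
variable (L : Module.End ℝ (Polynomial ℝ))
  (hL1 : L X = X ^ 2)
  (hL : ∀ k : ℕ, 2 ≤ k →
      L (X ^ k) = (∑ i ∈ Finset.Icc 1 (k - 1), X ^ i) + X ^ (k + 1))
  (f : ℕ → ℕ → ℝ) (hf : ∀ n b, f n b = ((L ^ n) (X ^ b)).eval 1)

include hL1 hL hf

lemma f_rec (b n : ℕ) (hb : 1 ≤ b) :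
    f n (b+1) = f n b + ∑ j ∈ Finset.range n, f j b * f (n-1-j) 1 := by
  have h := congrArg (Polynomial.eval (1:ℝ)) (key_s10 L hL1 hL b n hb)
  rw [eval_add, eval_mul, eval_X, one_mul, eval_finset_sum] at h
  simp only [eval_smul, smul_eq_mul] at h
  rw [hf n (b+1), hf n b, h]
  congr 1
  refine Finset.sum_congr rfl fun j hj => ?_
  rw [hf j b, hf (n-1-j) 1, pow_one]

lemma gf_step (b : ℕ) (hb : 1 ≤ b) :
    PowerSeries.mk (fun n => f n (b+1)) =
      PowerSeries.mk (fun n => f n b) *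
        (PowerSeries.X * PowerSeries.mk (fun n => f n 1) + 1) := by
  ext n
  rw [mul_add, mul_one, map_add, mul_left_comm, PowerSeries.coeff_mk, PowerSeries.coeff_mk,
    f_rec L hL1 hL f hf b n hb]
  have h : (PowerSeries.coeff n) (PowerSeries.X *
      (PowerSeries.mk (fun n => f n b) * PowerSeries.mk (fun n => f n 1)))
      = ∑ j ∈ Finset.range n, f j b * f (n-1-j) 1 := by
    cases n with
    | zero => simp
    | succ m =>
      rw [PowerSeries.coeff_succ_X_mul, PowerSeries.coeff_mul,
        Finset.Nat.sum_antidiagonal_eq_sum_range_succ_mk]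
      refine Finset.sum_congr rfl fun j hj => ?_
      simp only [PowerSeries.coeff_mk, Nat.add_sub_cancel]
  rw [h]
  ring
end

/-- For the Motzkin rule operator `L` and the associated family
of sequences `f n b = [L^n(X^b)]_{X=1}`, for every axiom `b ≥ 1` the ordinary
generating function of `(f_n^{(b)})_n` equals `M(x)·(x·M(x)+1)^{b-1}`, where
`M(x)` is the generating function of the sequence with axiom 1 (the Motzkin
numbers). -/
theorem motzkin_sequence_generating_function
    (L : Module.End ℝ (Polynomial ℝ))
    (hL1 : L X = X ^ 2)
    (hL : ∀ k : ℕ, 2 ≤ k →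
      L (X ^ k) = (∑ i ∈ Finset.Icc 1 (k - 1), X ^ i) + X ^ (k + 1))
    (f : ℕ → ℕ → ℝ) (hf : ∀ n b, f n b = ((L ^ n) (X ^ b)).eval 1)
    (b : ℕ) (hb : 1 ≤ b) :
    PowerSeries.mk (fun n => f n b) =
      PowerSeries.mk (fun n => f n 1) *
        (PowerSeries.X * PowerSeries.mk (fun n => f n 1) + 1) ^ (b - 1) := by
  induction b, hb using Nat.le_induction with
  | base => simp
  | succ b hb ih =>
    rw [gf_step L hL1 hL f hf b hb, ih, Nat.add_sub_cancel, mul_assoc,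
      ← pow_succ]
    congr 2
    omega
end

section
/- Let L and M be commuting ℝ-linear endomorphisms of ℝ[X] (i.e. L∘M = M∘L), let b be a natural number, and let (p_n)_{n∈ℕ} be the sequence of level polynomials of the doubled mixed succession rule (b)L^{+1}M^{+2}, defined by p_0 = X^b, p_1 = L(p_0), and p_{n+2} = L(p_{n+1}) + M(p_n) for all n. Then the associated numerical sequence f_n^{(b)} = p_n(1) satisfies, for every n, f_n^{(b)} = Σ_{k=0}^{⌊n/2⌋} C(n-k, k) · Σ_i μ_{k,i}^{(b)} · l_{n-2k}^{(i)}, where μ_{k,i}^{(b)} is the coefficient of X^i in M^k(X^b) (the i-sum ranging over 0 ≤ i ≤ deg(M^k(X^b))) and l_m^{(i)} = (L^m(X^i)) evaluated at X = 1 is the sequence associated with L with axiom i. -/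
open Polynomial

noncomputable def Sop (L M : Module.End ℝ (Polynomial ℝ)) (n : ℕ) :
    Module.End ℝ (Polynomial ℝ) :=
  ∑ k ∈ Finset.range (n / 2 + 1), ((n - k).choose k : ℝ) • (L ^ (n - 2 * k) * M ^ k)

lemma Sop_rec (L M : Module.End ℝ (Polynomial ℝ)) (hcomm : L * M = M * L) (n : ℕ) :
    Sop L M (n + 2) = L * Sop L M (n + 1) + M * Sop L M n := by
  have hc : Commute L M := hcomm
  unfold Sop
  rw [Finset.mul_sum, Finset.mul_sum]
  have h1 : ∀ k ∈ Finset.range ((n+1)/2 + 1),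
      L * (((n+1-k).choose k : ℝ) • (L ^ (n+1-2*k) * M ^ k))
        = ((n+1-k).choose k : ℝ) • (L ^ (n+2-2*k) * M ^ k) := by
    intro k hk
    rw [Finset.mem_range] at hk
    have h2k : 2 * k ≤ n + 1 := by omega
    rw [mul_smul_comm, ← mul_assoc, ← pow_succ']
    congr 3
    omega
  rw [Finset.sum_congr rfl h1]
  have h2 : ∀ k ∈ Finset.range (n/2 + 1),
      M * (((n-k).choose k : ℝ) • (L ^ (n-2*k) * M ^ k))
        = ((n-k).choose k : ℝ) • (L ^ (n+2-2*(k+1)) * M ^ (k+1)) := by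
    intro k hk
    rw [Finset.mem_range] at hk
    rw [mul_smul_comm, ← mul_assoc, (hc.symm.pow_right _).eq, mul_assoc, ← pow_succ']
    congr 3
    omega
  rw [Finset.sum_congr rfl h2]
  -- LHS: split off k = 0
  have hL : (n + 2) / 2 + 1 = (n / 2 + 1) + 1 := by omega
  rw [hL, Finset.sum_range_succ']
  -- first RHS sum: split off k = 0, possibly extend range
  have hR1 : Finset.range ((n+1)/2 + 1) ⊆ Finset.range (n/2 + 1 + 1) := by
    apply Finset.range_subset_range.2; omega
  rw [Finset.sum_subset hR1 (by
    intro k hk hk'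
    rw [Finset.mem_range] at hk
    rw [Finset.mem_range, not_lt] at hk'
    have : n + 1 - k < k := by omega
    rw [Nat.choose_eq_zero_of_lt this]
    simp)]
  conv_rhs => rw [Finset.sum_range_succ']
  simp only [Nat.sub_zero, Nat.mul_zero, Nat.choose_zero_right, Nat.cast_one, pow_zero,
    mul_one, one_smul]
  conv_rhs => rw [add_right_comm]
  congr 1
  rw [← Finset.sum_add_distrib]
  apply Finset.sum_congr rfl
  intro k hk
  rw [Finset.mem_range] at hk
  have e1 : n + 2 - (k + 1) = (n - k) + 1 := by omega
  have e2 : n + 1 - (k + 1) = n - k := by omega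
  rw [e1, e2, Nat.choose_succ_succ, Nat.cast_add, add_smul, add_comm]

lemma eval_pow_apply (L : Module.End ℝ (Polynomial ℝ)) (m : ℕ) (q : Polynomial ℝ) :
    ((L ^ m) q).eval 1 = ∑ i ∈ Finset.range (q.natDegree + 1),
      q.coeff i * ((L ^ m) (X ^ i)).eval 1 := by
  conv_lhs => rw [q.as_sum_range]
  rw [map_sum, eval_finset_sum]
  apply Finset.sum_congr rfl
  intro i _
  have h : (monomial i (q.coeff i) : Polynomial ℝ) = q.coeff i • X ^ i := by
    rw [smul_eq_C_mul, C_mul_X_pow_eq_monomial]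
  rw [h, map_smul, eval_smul, smul_eq_mul]

/-- main theorem, commuting case: If `L` and `M` are commuting
rule operators and `(p_n)` are the level polynomials of the doubled mixed
succession rule `(b)L^{+1}M^{+2}`, then the associated numerical sequence
`f_n^{(b)} = p_n(1)` satisfies
`f_n^{(b)} = Σ_{k=0}^{⌊n/2⌋} C(n-k,k) Σ_i μ_{k,i}^{(b)} l_{n-2k}^{(i)}`,
where `μ_{k,i}^{(b)}` is the coefficient of `X^i` in `M^k(X^b)` and
`l_m^{(i)} = [L^m(X^i)]_{X=1}`. -/
theorem mixed_rule_sequence_of_commute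
    (L M : Module.End ℝ (Polynomial ℝ)) (hcomm : L * M = M * L)
    (b : ℕ) (p : ℕ → Polynomial ℝ)
    (hp0 : p 0 = X ^ b) (hp1 : p 1 = L (p 0))
    (hrec : ∀ n, p (n + 2) = L (p (n + 1)) + M (p n)) (n : ℕ) :
    (p n).eval 1 = ∑ k ∈ Finset.range (n / 2 + 1),
      (Nat.choose (n - k) k : ℝ) *
        ∑ i ∈ Finset.range (((M ^ k) (X ^ b)).natDegree + 1),
          ((M ^ k) (X ^ b)).coeff i * ((L ^ (n - 2 * k)) (X ^ i)).eval 1 := by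
  have hS : ∀ m, p m = (Sop L M m) (X ^ b) := by
    intro m
    induction m using Nat.twoStepInduction with
    | zero => simp [Sop, hp0]
    | one => simp [Sop, hp1, hp0]
    | more m ih1 ih2 =>
      rw [hrec m, Sop_rec L M hcomm m, LinearMap.add_apply, Module.End.mul_apply,
        Module.End.mul_apply, ih1, ih2]
  rw [hS n]
  unfold Sop
  rw [LinearMap.sum_apply, eval_finset_sum]
  apply Finset.sum_congr rfl
  intro k hk
  rw [LinearMap.smul_apply, Module.End.mul_apply, eval_smul, smul_eq_mul]
  congr 1
  exact eval_pow_apply L (n - 2 * k) ((M ^ k) (X ^ b))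
end

section
/- Let L be an ℝ-linear endomorphism of ℝ[X], let b be a natural number, and let (p_n)_{n∈ℕ} be defined by p_0 = X^b, p_1 = L(p_0), and p_{n+2} = L(p_{n+1}) + p_n for all n (the level polynomials of the doubled mixed rule (b)L^{+1}𝟙^{+2}, where 𝟙 is the identity operator). Then for every n, p_n(1) = Σ_{k=0}^{⌊n/2⌋} C(n-k, k) · l_{n-2k}^{(b)}, where l_m^{(b)} = (L^m(X^b)) evaluated at X = 1. (Equivalently, in terms of ordinary generating functions, f^{(b)}(x) = (1/(1−x²)) · l^{(b)}(x/(1−x²)).) -/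
open Polynomial

/-- For any rule operator `L`, the numerical sequence associated
with the doubled mixed succession rule `(b)L^{+1}𝟙^{+2}` (where `𝟙` is the
identity operator) satisfies
`f_n^{(b)} = Σ_{k=0}^{⌊n/2⌋} C(n-k,k) l_{n-2k}^{(b)}`, where
`l_m^{(b)} = [L^m(X^b)]_{X=1}`. -/
theorem mixed_rule_with_identity_second
    (L : Module.End ℝ (Polynomial ℝ))
    (b : ℕ) (p : ℕ → Polynomial ℝ)
    (hp0 : p 0 = X ^ b) (hp1 : p 1 = L (p 0))
    (hrec : ∀ n, p (n + 2) = L (p (n + 1)) + p n) (n : ℕ) :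
    (p n).eval 1 = ∑ k ∈ Finset.range (n / 2 + 1),
      (Nat.choose (n - k) k : ℝ) * ((L ^ (n - 2 * k)) (X ^ b)).eval 1 := by
  set v : Polynomial ℝ := X ^ b with hv
  have key : ∀ m, p m = ∑ k ∈ Finset.range (m + 1),
      ((Nat.choose (m - k) k : ℝ)) • (L ^ (m - 2 * k)) v := by
    intro m
    induction m using Nat.twoStepInduction with
    | zero => simp [hp0]
    | one =>
      rw [hp1, hp0]
      rw [Finset.sum_range_succ, Finset.sum_range_succ, Finset.sum_range_zero]
      norm_num
    | more m ih1 ih2 =>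
      have pascal : ∀ k : ℕ, (m + 1 - k).choose (k + 1)
          = (m - k).choose (k + 1) + (m - k).choose k := by
        intro k
        rcases le_or_gt k m with h | h
        · have hm : m + 1 - k = (m - k) + 1 := by omega
          rw [hm, Nat.choose_succ_succ, Nat.add_comm]
        · have h1 : m + 1 - k = 0 := by omega
          have h2 : m - k = 0 := by omega
          obtain ⟨k', rfl⟩ : ∃ k', k = k' + 1 := ⟨k - 1, by omega⟩
          simp [h1, h2]
      rw [hrec m, ih1, ih2, map_sum]
      -- simplify L applied to each term
      have hA : ∀ k ∈ Finset.range (m + 2),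
          L (((m + 1 - k).choose k : ℝ) • (L ^ (m + 1 - 2 * k)) v)
          = ((m + 1 - k).choose k : ℝ) • (L ^ (m + 2 - 2 * k)) v := by
        intro k _
        rw [map_smul]
        by_cases h : 2 * k ≤ m + 1
        · have : m + 2 - 2 * k = (m + 1 - 2 * k) + 1 := by omega
          rw [this, pow_succ', Module.End.mul_apply]
        · have : (m + 1 - k).choose k = 0 := Nat.choose_eq_zero_of_lt (by omega)
          simp [this]
      rw [Finset.sum_congr rfl hA]
      -- peel off k = 0 from LHS and from the first RHS sum
      rw [Finset.sum_range_succ'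
        (fun k => ((m + 2 - k).choose k : ℝ) • (L ^ (m + 2 - 2 * k)) v) (m + 2)]
      rw [Finset.sum_range_succ'
        (fun k => ((m + 1 - k).choose k : ℝ) • (L ^ (m + 2 - 2 * k)) v) (m + 1)]
      have hterm : ∀ k : ℕ,
          ((m + 2 - (k + 1)).choose (k + 1) : ℝ) • (L ^ (m + 2 - 2 * (k + 1))) v
          = ((m - k).choose (k + 1) : ℝ) • (L ^ (m - 2 * k)) v
            + ((m - k).choose k : ℝ) • (L ^ (m - 2 * k)) v := by
        intro k
        have he : m + 2 - 2 * (k + 1) = m - 2 * k := by omega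
        have hc : m + 2 - (k + 1) = m + 1 - k := by omega
        rw [he, hc, pascal k]
        push_cast
        rw [add_smul]
      have hsplit : ∑ k ∈ Finset.range (m + 2),
          ((m + 2 - (k + 1)).choose (k + 1) : ℝ) • (L ^ (m + 2 - 2 * (k + 1))) v
          = (∑ k ∈ Finset.range (m + 2),
              ((m - k).choose (k + 1) : ℝ) • (L ^ (m - 2 * k)) v)
            + ∑ k ∈ Finset.range (m + 2),
              ((m - k).choose k : ℝ) • (L ^ (m - 2 * k)) v := by
        rw [← Finset.sum_add_distrib]
        exact Finset.sum_congr rfl fun k _ => hterm k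
      rw [hsplit]
      -- first sum: drop the vanishing top term, identify with the RHS shifted sum
      have h1 : ∑ k ∈ Finset.range (m + 2),
          ((m - k).choose (k + 1) : ℝ) • (L ^ (m - 2 * k)) v
          = ∑ k ∈ Finset.range (m + 1),
          ((m + 1 - (k + 1)).choose (k + 1) : ℝ) • (L ^ (m + 2 - 2 * (k + 1))) v := by
        rw [Finset.sum_range_succ]
        have : (m - (m + 1)).choose (m + 2) = 0 := by
          have : m - (m + 1) = 0 := by omega
          simp [this]
        rw [this]
        push_cast
        rw [zero_smul, add_zero]
        refine Finset.sum_congr rfl fun k _ => ?_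
        have he : m + 2 - 2 * (k + 1) = m - 2 * k := by omega
        rw [he]
      -- second sum: drop the vanishing top term
      have h2 : ∑ k ∈ Finset.range (m + 2),
          ((m - k).choose k : ℝ) • (L ^ (m - 2 * k)) v
          = ∑ k ∈ Finset.range (m + 1),
          ((m - k).choose k : ℝ) • (L ^ (m - 2 * k)) v := by
        rw [Finset.sum_range_succ]
        have : (m - (m + 1)).choose (m + 1) = 0 := by
          have : m - (m + 1) = 0 := by omega
          simp [this]
        rw [this]
        push_cast
        rw [zero_smul, add_zero]
      rw [h1, h2]
      norm_num
      abel
  rw [key n]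
  rw [eval_finset_sum]
  rw [← Finset.sum_subset (Finset.range_subset_range.mpr (by omega : n / 2 + 1 ≤ n + 1))]
  · exact Finset.sum_congr rfl fun k _ => by rw [eval_smul, smul_eq_mul]
  · intro k hk hk'
    simp only [Finset.mem_range] at hk hk'
    have : (n - k).choose k = 0 := Nat.choose_eq_zero_of_lt (by omega)
    simp [this]
end

section
/- Let M be an ℝ-linear endomorphism of ℝ[X], let b be a natural number, and let (p_n)_{n∈ℕ} be defined by p_0 = X^b, p_1 = p_0, and p_{n+2} = p_{n+1} + M(p_n) for all n (the level polynomials of the doubled mixed rule (b)𝟙^{+1}M^{+2}, where 𝟙 is the identity operator). Then for every n, p_n(1) = Σ_{k=0}^{⌊n/2⌋} C(n-k, k) · m_k^{(b)}, where m_k^{(b)} = (M^k(X^b)) evaluated at X = 1. (Equivalently, in terms of ordinary generating functions, f^{(b)}(x) = (1/(1−x)) · m^{(b)}(x²/(1−x)).) -/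
open Polynomial

/-- For any rule operator `M`, the numerical sequence associated
with the doubled mixed succession rule `(b)𝟙^{+1}M^{+2}` (where `𝟙` is the
identity operator) satisfies
`f_n^{(b)} = Σ_{k=0}^{⌊n/2⌋} C(n-k,k) m_k^{(b)}`, where
`m_k^{(b)} = [M^k(X^b)]_{X=1}`. -/
theorem mixed_rule_with_identity_first
    (M : Module.End ℝ (Polynomial ℝ))
    (b : ℕ) (p : ℕ → Polynomial ℝ)
    (hp0 : p 0 = X ^ b) (hp1 : p 1 = p 0)
    (hrec : ∀ n, p (n + 2) = p (n + 1) + M (p n)) (n : ℕ) :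
    (p n).eval 1 = ∑ k ∈ Finset.range (n / 2 + 1),
      (Nat.choose (n - k) k : ℝ) * ((M ^ k) (X ^ b)).eval 1 := by
  suffices h : p n = ∑ k ∈ Finset.range (n / 2 + 1),
      (Nat.choose (n - k) k : ℝ) • ((M ^ k) (X ^ b)) by
    rw [h, eval_finset_sum]
    apply Finset.sum_congr rfl
    intro k _
    simp [smul_eq_mul]
  induction n using Nat.strong_induction_on with
  | _ n ih =>
    match n with
    | 0 => simpa using hp0
    | 1 => simp [hp1, hp0]
    | (n + 2) => ?_
    rw [hrec n, ih (n+1) (by omega), ih n (by omega)]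
    rw [map_sum]
    have hM : ∀ k, M ((Nat.choose (n - k) k : ℝ) • (M ^ k) (X ^ b))
        = (Nat.choose (n - k) k : ℝ) • (M ^ (k+1)) (X ^ b) := by
      intro k
      rw [map_smul, pow_succ']
      rfl
    simp only [hM]
    -- peel off the k = 0 term of both sides' sums
    have hd2 : (n + 2) / 2 + 1 = (n / 2 + 1) + 1 := by omega
    rw [hd2, Finset.sum_range_succ' (fun k =>
      (Nat.choose (n + 2 - k) k : ℝ) • (M ^ k) (X ^ b)) (n / 2 + 1)]
    rw [Finset.sum_range_succ' (fun k =>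
      (Nat.choose (n + 1 - k) k : ℝ) • (M ^ k) (X ^ b)) ((n + 1) / 2)]
    simp only [Nat.sub_zero, Nat.choose_zero_right, Nat.cast_one, one_smul, pow_zero]
    have pascal : ∀ k ∈ Finset.range (n / 2 + 1),
        (Nat.choose (n + 2 - (k + 1)) (k + 1) : ℝ) • (M ^ (k + 1)) (X ^ b)
        = (Nat.choose (n + 1 - (k + 1)) (k + 1) : ℝ) • (M ^ (k + 1)) (X ^ b)
          + (Nat.choose (n - k) k : ℝ) • (M ^ (k + 1)) (X ^ b) := by
      intro k hk
      rw [Finset.mem_range] at hk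
      have h1 : n + 2 - (k + 1) = (n - k) + 1 := by omega
      have h2 : n + 1 - (k + 1) = n - k := by omega
      rw [h1, h2, Nat.choose_succ_succ, Nat.cast_add, add_smul, add_comm]
    rw [Finset.sum_congr rfl pascal, Finset.sum_add_distrib]
    have hsub : Finset.range ((n + 1) / 2) ⊆ Finset.range (n / 2 + 1) := by
      apply Finset.range_subset_range.2; omega
    have hzero : ∀ k ∈ Finset.range (n / 2 + 1), k ∉ Finset.range ((n + 1) / 2) →
        (Nat.choose (n + 1 - (k + 1)) (k + 1) : ℝ) • (M ^ (k + 1)) (X ^ b) = 0 := by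
      intro k hk hk'
      rw [Finset.mem_range] at hk
      rw [Finset.mem_range, not_lt] at hk'
      have : n + 1 - (k + 1) < k + 1 := by omega
      rw [Nat.choose_eq_zero_of_lt this]
      simp
    rw [← Finset.sum_subset hsub hzero]
    ring
end

section
/- Let L be the ℝ-linear endomorphism of ℝ[X] with L(1) = X and L(X^k) = k·X^{k+1} for all k ≥ 1 (the factorial rule operator with axiom 1). Let a ≥ 1 be a natural number and let M be an ℝ-linear endomorphism of ℝ[X] with M(1) = X^a. Then M commutes with L (i.e. L∘M = M∘L) if and only if M(X^n) = n·C(a+n−1, a−1)·X^{a+n} for every n ≥ 1; that is, if and only if M = L_{[a]} = (x^{a+1}/(a−1)!)·D^a·x^{a−1}, where D is the derivative operator. -/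
open Polynomial

lemma key_choose (b n : ℕ) :
    (b + 1 + n) * Nat.choose (b + n) b = (n + 1) * Nat.choose (b + n + 1) b := by
  have h1 := Nat.add_one_mul_choose_eq (b + n) b
  have h2 := Nat.choose_succ_right_eq (b + n + 1) b
  have h3 : b + n + 1 - b = n + 1 := by omega
  rw [h3] at h2
  calc (b + 1 + n) * Nat.choose (b + n) b
      = (b + n + 1) * Nat.choose (b + n) b := by ring
    _ = Nat.choose (b + n + 1) (b + 1) * (b + 1) := h1
    _ = (n + 1) * Nat.choose (b + n + 1) b := by rw [h2]; ring

/-- Let `L` be the factorial rule operator with axiom 1 (i.e.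
`L(1) = X` and `L(X^k) = k·X^(k+1)` for `k ≥ 1`), let `a ≥ 1` and let `M` be a
rule operator with `M(1) = X^a`. Then `M` commutes with `L` if and only if
`M(X^n) = n·C(a+n-1,a-1)·X^(a+n)` for every `n ≥ 1`, i.e. iff
`M = L_{[a]} = (x^{a+1}/(a-1)!) D^a x^{a-1}`. -/
theorem factorial_operator_commutant
    (L : Module.End ℝ (Polynomial ℝ))
    (hL0 : L 1 = X)
    (hL : ∀ k : ℕ, 1 ≤ k → L (X ^ k) = (k : ℝ) • X ^ (k + 1))
    (a : ℕ) (ha : 1 ≤ a)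
    (M : Module.End ℝ (Polynomial ℝ))
    (hM0 : M 1 = X ^ a) :
    L * M = M * L ↔
      ∀ n : ℕ, 1 ≤ n →
        M (X ^ n) = ((n * Nat.choose (a + n - 1) (a - 1) : ℕ) : ℝ) • X ^ (a + n) := by
  obtain ⟨b, rfl⟩ : ∃ b, a = b + 1 := ⟨a - 1, by omega⟩
  have hsub : ∀ n : ℕ, b + 1 + n - 1 = b + n := fun n => by omega
  have hsub2 : b + 1 - 1 = b := by omega
  constructor
  · intro hcomm n hn
    induction n, hn using Nat.le_induction with
    | base =>
      have h := DFunLike.congr_fun hcomm (1 : Polynomial ℝ)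
      simp only [Module.End.mul_apply, hM0, hL0] at h
      rw [hL (b + 1) (by omega)] at h
      rw [pow_one, ← h, hsub 1, hsub2, Nat.choose_succ_self_right]
      push_cast; ring_nf
    | succ m hm ih =>
      have h := DFunLike.congr_fun hcomm ((X : Polynomial ℝ) ^ m)
      simp only [Module.End.mul_apply] at h
      rw [ih, hL m hm, map_smul, map_smul, hL (b + 1 + m) (by omega)] at h
      have hm0 : ((m : ℝ)) ≠ 0 := by positivity
      apply smul_right_injective (Polynomial ℝ) hm0
      beta_reduce
      rw [← h]
      rw [hsub m, hsub (m+1), hsub2, smul_smul, smul_smul]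
      have harg : b + 1 + m + 1 = b + 1 + (m + 1) := by omega
      rw [harg]
      congr 1
      have hk := key_choose b m
      have hk' : ((b + 1 + m : ℕ) : ℝ) * ((Nat.choose (b + m) b : ℕ) : ℝ)
          = ((m + 1 : ℕ) : ℝ) * ((Nat.choose (b + m + 1) b : ℕ) : ℝ) := by
        exact_mod_cast congrArg (Nat.cast : ℕ → ℝ) hk
      push_cast at hk' ⊢
      have harg2 : b + (m + 1) = b + m + 1 := by omega
      rw [harg2]
      linear_combination (m : ℝ) * hk'
  · intro h
    apply LinearMap.ext
    intro p
    induction p using Polynomial.induction_on' with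
    | add p q hp hq => simp [map_add, hp, hq]
    | monomial n c =>
      rw [← Polynomial.smul_X_eq_monomial, map_smul, map_smul]
      congr 1
      show L (M (X ^ n)) = M (L (X ^ n))
      match n with
      | 0 =>
        simp only [pow_zero, hM0, hL0]
        rw [hL (b + 1) (by omega), ← pow_one (X : Polynomial ℝ), h 1 (by omega)]
        rw [hsub 1, hsub2, Nat.choose_succ_self_right]
        push_cast; ring_nf
      | m + 1 =>
        rw [h (m + 1) (by omega), hL (m + 1) (by omega), map_smul, map_smul,
          h (m + 2) (by omega), hL (b + 1 + (m + 1)) (by omega),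
          hsub (m+1), hsub (m+2), hsub2, smul_smul, smul_smul]
        have he : b + 1 + (m + 1) + 1 = b + 1 + (m + 2) := by omega
        rw [he]
        congr 1
        have hk := key_choose b (m + 1)
        have hk' : ((b + 1 + (m + 1) : ℕ) : ℝ) * ((Nat.choose (b + (m + 1)) b : ℕ) : ℝ)
            = ((m + 1 + 1 : ℕ) : ℝ) * ((Nat.choose (b + (m + 1) + 1) b : ℕ) : ℝ) := by
          exact_mod_cast congrArg (Nat.cast : ℕ → ℝ) hk
        have harg2 : b + (m + 2) = b + (m + 1) + 1 := by omega
        rw [harg2]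
        push_cast at hk' ⊢
        linear_combination (m + 1 : ℝ) * hk'
end

section
/- Let L and M be ℝ-linear endomorphisms of ℝ[X] with L(X^k) = k·X^{k+1} and M(X^k) = k·(k+1)·X^{k+2} for all k ≥ 1. Let b ≥ 1 and define (p_n)_{n∈ℕ} by p_0 = X^b, p_1 = L(p_0), and p_{n+2} = L(p_{n+1}) + M(p_n) for all n (the level polynomials of the doubled mixed succession rule Ω_b = (b)L^{+1}M^{+2}, i.e. (k) produces (k+1)^k at the next level and (k+2)^{k(k+1)} two levels down). Then for every n, the associated sequence satisfies f_n^{(b)} = p_n(1) = b^{(n)} · Fib(n+1), where b^{(n)} = b·(b+1)·⋯·(b+n−1) is the rising factorial and Fib is the Fibonacci sequence with Fib(1) = Fib(2) = 1. In particular for b = 1, f_n = n!·Fib(n+1). -/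
open Polynomial

/-- Let `L` be the factorial rule operator (`L(X^k) = k·X^(k+1)`
for `k ≥ 1`) and `M = L_{[2]}` (`M(X^k) = k(k+1)·X^(k+2)` for `k ≥ 1`). For an
axiom `b ≥ 1`, the numerical sequence of the doubled mixed succession rule
`(b)L^{+1}M^{+2}` is `f_n^{(b)} = b^{(n)}·F_n`, the product of the rising
factorial `b^{(n)} = b(b+1)⋯(b+n-1)` and the Fibonacci number
`F_n = Fib(n+1)`. -/
theorem factorial_mixed_rule_sequence
    (L M : Module.End ℝ (Polynomial ℝ))
    (hL : ∀ k : ℕ, 1 ≤ k → L (X ^ k) = (k : ℝ) • X ^ (k + 1))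
    (hM : ∀ k : ℕ, 1 ≤ k → M (X ^ k) = ((k * (k + 1) : ℕ) : ℝ) • X ^ (k + 2))
    (b : ℕ) (hb : 1 ≤ b) (p : ℕ → Polynomial ℝ)
    (hp0 : p 0 = X ^ b) (hp1 : p 1 = L (p 0))
    (hrec : ∀ n, p (n + 2) = L (p (n + 1)) + M (p n)) (n : ℕ) :
    (p n).eval 1 =
      (((∏ i ∈ Finset.range n, (b + i)) * Nat.fib (n + 1) : ℕ) : ℝ) := by
  set c : ℕ → ℕ := fun n => (∏ i ∈ Finset.range n, (b + i)) * Nat.fib (n + 1) with hc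
  suffices h : ∀ n, p n = (c n : ℝ) • X ^ (b + n) ∧
      p (n + 1) = (c (n + 1) : ℝ) • X ^ (b + (n + 1)) by
    rw [(h n).1]; simp [hc]
  intro n
  induction n with
  | zero =>
    constructor
    · simp [hp0, hc]
    · rw [hp1, hp0, hL b hb]
      simp [hc]
  | succ n ih =>
    refine ⟨ih.2, ?_⟩
    rw [hrec n, ih.1, ih.2, map_smul, map_smul, hL _ (by omega), hM _ (by omega)]
    rw [smul_smul, smul_smul]
    have hexp : b + (n + 1) + 1 = b + n + 2 := by omega
    rw [hexp]
    have harith : (c (n + 2) : ℝ) =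
        (c (n + 1) : ℝ) * ((b : ℝ) + (n + 1)) + (c n : ℝ) * (((b + n) * (b + n + 1) : ℕ) : ℝ) := by
      have : c (n + 2) = c (n + 1) * (b + (n + 1)) + c n * ((b + n) * (b + n + 1)) := by
        simp only [hc, Finset.prod_range_succ, Nat.fib_add_two]
        ring
      rw [this]; push_cast; ring
    rw [← add_smul]
    have : b + (n + 1 + 1) = b + n + 2 := by omega
    rw [this, harith]
    congr 1
    push_cast
    ring
end
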